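/- Let N ≥ 1 be an integer and q ∈ ℂ nonzero. Then in F_q(N): Ω_i z_k = z_k Ω_i and Ω_i z_k^* = z_k^* Ω_i whenever i ≤ k ≤ N−1; Ω_i z_k = q^2 z_k Ω_i and Ω_i z_k^* = q^{−2} z_k^* Ω_i whenever 0 ≤ k < i; z_i z_i^* − z_i^* z_i = (q^2 − 1) Ω_{i+1} and q^2 z_i z_i^* − z_i^* z_i = (q^2 − 1) Ω_i for every i; in particular Ω = Ω_0 commutes with all 2N generators and hence is central in F_q(N). -/
import Mathlib


open FreeAlgebra

/-- Generators of `F_q(N)`: `Sum.inl i` is `z_i` and `Sum.inr i` is `z_i^*`. -/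
abbrev FqGen (N : ℕ) : Type := Fin N ⊕ Fin N

/-- The defining relations of `F_q(N)`. -/
inductive FqRel (N : ℕ) (q : ℂ) : FreeAlgebra ℂ (FqGen N) → FreeAlgebra ℂ (FqGen N) → Prop
  | zz (i j : Fin N) (h : i < j) :
      FqRel N q (ι ℂ (Sum.inl i) * ι ℂ (Sum.inl j))
        (q⁻¹ • (ι ℂ (Sum.inl j) * ι ℂ (Sum.inl i)))
  | ss (i j : Fin N) (h : i < j) :
      FqRel N q (ι ℂ (Sum.inr i) * ι ℂ (Sum.inr j))
        (q • (ι ℂ (Sum.inr j) * ι ℂ (Sum.inr i)))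
  | zs (i j : Fin N) (h : i ≠ j) :
      FqRel N q (ι ℂ (Sum.inl i) * ι ℂ (Sum.inr j))
        (q⁻¹ • (ι ℂ (Sum.inr j) * ι ℂ (Sum.inl i)))
  | heis (i : Fin N) :
      FqRel N q (ι ℂ (Sum.inl i) * ι ℂ (Sum.inr i) - ι ℂ (Sum.inr i) * ι ℂ (Sum.inl i))
        ((q ^ 2 - 1) • ∑ k ∈ Finset.univ.filter (fun k : Fin N => i < k),
            ι ℂ (Sum.inl k) * ι ℂ (Sum.inr k))

/-- The algebra `F_q(N)`: the quotient of the free algebra by (the two-sided ideal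
generated by) the defining relations. -/
abbrev Fq (N : ℕ) (q : ℂ) : Type := RingQuot (FqRel N q)

/-- The generator `z_i` of `F_q(N)`. -/
noncomputable def zGen (N : ℕ) (q : ℂ) (i : Fin N) : Fq N q :=
  RingQuot.mkAlgHom ℂ (FqRel N q) (ι ℂ (Sum.inl i))

/-- The generator `z_i^*` of `F_q(N)`. -/
noncomputable def zsGen (N : ℕ) (q : ℂ) (i : Fin N) : Fq N q :=
  RingQuot.mkAlgHom ℂ (FqRel N q) (ι ℂ (Sum.inr i))


/-- `Ω_i = Σ_{k ≥ i} z_k z_k^*` (so `Ω_N = 0` and `Ω = Ω_0`). -/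
noncomputable def OmegaEl (N : ℕ) (q : ℂ) (i : ℕ) : Fq N q :=
  ∑ k ∈ Finset.univ.filter (fun k : Fin N => i ≤ (k : ℕ)), zGen N q k * zsGen N q k


section FqAux

variable {N : ℕ} {q : ℂ}

local notation "Z" => zGen N q
local notation "S" => zsGen N q

lemma fq_rel_zz {i j : Fin N} (h : i < j) : Z i * Z j = q⁻¹ • (Z j * Z i) := by
  have := RingQuot.mkAlgHom_rel ℂ (FqRel.zz (N := N) (q := q) i j h)
  simpa [zGen, map_mul, map_smul] using this

lemma fq_rel_zz' (hq : q ≠ 0) {i j : Fin N} (h : i < j) : Z j * Z i = q • (Z i * Z j) := by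
  rw [fq_rel_zz h, smul_smul, mul_inv_cancel₀ hq, one_smul]

lemma fq_rel_ss {i j : Fin N} (h : i < j) : S i * S j = q • (S j * S i) := by
  have := RingQuot.mkAlgHom_rel ℂ (FqRel.ss (N := N) (q := q) i j h)
  simpa [zsGen, map_mul, map_smul] using this

lemma fq_rel_ss' (hq : q ≠ 0) {i j : Fin N} (h : i < j) : S j * S i = q⁻¹ • (S i * S j) := by
  rw [fq_rel_ss h, smul_smul, inv_mul_cancel₀ hq, one_smul]

lemma fq_rel_zs {i j : Fin N} (h : i ≠ j) : Z i * S j = q⁻¹ • (S j * Z i) := by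
  have := RingQuot.mkAlgHom_rel ℂ (FqRel.zs (N := N) (q := q) i j h)
  simpa [zGen, zsGen, map_mul, map_smul] using this

lemma fq_rel_zs' (hq : q ≠ 0) {i j : Fin N} (h : i ≠ j) : S j * Z i = q • (Z i * S j) := by
  rw [fq_rel_zs h, smul_smul, mul_inv_cancel₀ hq, one_smul]

lemma fq_heis (i : Fin N) :
    Z i * S i - S i * Z i = (q ^ 2 - 1) • OmegaEl N q ((i : ℕ) + 1) := by
  have h := RingQuot.mkAlgHom_rel ℂ (FqRel.heis (N := N) (q := q) i)
  have hf : (Finset.univ.filter (fun k : Fin N => (i : ℕ) + 1 ≤ (k : ℕ)))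
      = Finset.univ.filter (fun k : Fin N => i < k) := by
    ext k
    simp only [Finset.mem_filter, Finset.mem_univ, true_and, Fin.lt_def]
    omega
  simp only [map_sub, map_mul, map_smul, map_sum] at h
  simp only [OmegaEl, hf]
  simpa [zGen, zsGen] using h

lemma fq_w_z_lt (hq : q ≠ 0) {j k : Fin N} (h : k < j) :
    (Z j * S j) * Z k = q ^ 2 • (Z k * (Z j * S j)) := by
  have h1 : S j * Z k = q • (Z k * S j) := fq_rel_zs' hq h.ne
  have h2 : Z j * Z k = q • (Z k * Z j) := fq_rel_zz' hq h
  calc (Z j * S j) * Z k = Z j * (S j * Z k) := by rw [mul_assoc]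
    _ = q • (Z j * Z k * S j) := by rw [h1, mul_smul_comm, mul_assoc]
    _ = q ^ 2 • (Z k * (Z j * S j)) := by
        rw [h2, smul_mul_assoc, smul_smul, ← pow_two, mul_assoc]

lemma fq_w_z_gt (hq : q ≠ 0) {j k : Fin N} (h : j < k) :
    (Z j * S j) * Z k = Z k * (Z j * S j) := by
  have h1 : S j * Z k = q • (Z k * S j) := fq_rel_zs' hq h.ne'
  have h2 : Z j * Z k = q⁻¹ • (Z k * Z j) := fq_rel_zz h
  calc (Z j * S j) * Z k = Z j * (S j * Z k) := by rw [mul_assoc]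
    _ = q • (Z j * Z k * S j) := by rw [h1, mul_smul_comm, mul_assoc]
    _ = Z k * (Z j * S j) := by
        rw [h2, smul_mul_assoc, smul_smul, mul_inv_cancel₀ hq, one_smul, mul_assoc]

lemma fq_w_s_lt (hq : q ≠ 0) {j k : Fin N} (h : k < j) :
    (Z j * S j) * S k = (q ^ 2)⁻¹ • (S k * (Z j * S j)) := by
  have h1 : S j * S k = q⁻¹ • (S k * S j) := fq_rel_ss' hq h
  have h2 : Z j * S k = q⁻¹ • (S k * Z j) := fq_rel_zs h.ne'
  calc (Z j * S j) * S k = Z j * (S j * S k) := by rw [mul_assoc]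
    _ = q⁻¹ • (Z j * S k * S j) := by rw [h1, mul_smul_comm, mul_assoc]
    _ = (q ^ 2)⁻¹ • (S k * (Z j * S j)) := by
        rw [h2, smul_mul_assoc, smul_smul, ← mul_inv, ← pow_two, mul_assoc]

lemma fq_w_s_gt (hq : q ≠ 0) {j k : Fin N} (h : j < k) :
    (Z j * S j) * S k = S k * (Z j * S j) := by
  have h1 : S j * S k = q • (S k * S j) := fq_rel_ss h
  have h2 : Z j * S k = q⁻¹ • (S k * Z j) := fq_rel_zs h.ne
  calc (Z j * S j) * S k = Z j * (S j * S k) := by rw [mul_assoc]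
    _ = q • (Z j * S k * S j) := by rw [h1, mul_smul_comm, mul_assoc]
    _ = S k * (Z j * S j) := by
        rw [h2, smul_mul_assoc, smul_smul, mul_inv_cancel₀ hq, one_smul, mul_assoc]

lemma fq_omega_succ {m : ℕ} (hm : m < N) :
    OmegaEl N q m = Z ⟨m, hm⟩ * S ⟨m, hm⟩ + OmegaEl N q (m + 1) := by
  have hf : (Finset.univ.filter (fun k : Fin N => m ≤ (k : ℕ)))
      = insert ⟨m, hm⟩ (Finset.univ.filter (fun k : Fin N => m + 1 ≤ (k : ℕ))) := by
    ext k
    simp only [Finset.mem_filter, Finset.mem_univ, true_and, Finset.mem_insert]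
    constructor
    · intro hk
      rcases eq_or_lt_of_le hk with h | h
      · exact Or.inl (Fin.ext h.symm)
      · exact Or.inr h
    · rintro (rfl | hk)
      · exact le_refl _
      · omega
  have hnotmem : (⟨m, hm⟩ : Fin N) ∉
      Finset.univ.filter (fun k : Fin N => m + 1 ≤ (k : ℕ)) := by simp
  simp only [OmegaEl, hf, Finset.sum_insert hnotmem]

lemma fq_omega_z_lt (hq : q ≠ 0) {m : ℕ} {k : Fin N} (hk : (k : ℕ) < m) :
    OmegaEl N q m * Z k = q ^ 2 • (Z k * OmegaEl N q m) := by
  simp only [OmegaEl, Finset.sum_mul, Finset.mul_sum, Finset.smul_sum]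
  refine Finset.sum_congr rfl fun j hj => ?_
  simp only [Finset.mem_filter, Finset.mem_univ, true_and] at hj
  exact fq_w_z_lt hq (by rw [Fin.lt_def]; omega)

lemma fq_omega_s_lt (hq : q ≠ 0) {m : ℕ} {k : Fin N} (hk : (k : ℕ) < m) :
    OmegaEl N q m * S k = (q ^ 2)⁻¹ • (S k * OmegaEl N q m) := by
  simp only [OmegaEl, Finset.sum_mul, Finset.mul_sum, Finset.smul_sum]
  refine Finset.sum_congr rfl fun j hj => ?_
  simp only [Finset.mem_filter, Finset.mem_univ, true_and] at hj
  exact fq_w_s_lt hq (by rw [Fin.lt_def]; omega)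

lemma fq_omega_z_le (hq : q ≠ 0) :
    ∀ d m, ∀ k : Fin N, m + d = (k : ℕ) →
      OmegaEl N q m * Z k = Z k * OmegaEl N q m := by
  intro d
  induction d with
  | zero =>
    intro m k hm
    simp only [Nat.add_zero] at hm
    subst hm
    rw [fq_omega_succ k.isLt]
    simp only [Fin.eta]
    have h2 : OmegaEl N q ((k : ℕ) + 1) * Z k
        = q ^ 2 • (Z k * OmegaEl N q ((k : ℕ) + 1)) := fq_omega_z_lt hq (Nat.lt_succ_self _)
    have hh : S k * Z k = Z k * S k - (q ^ 2 - 1) • OmegaEl N q ((k : ℕ) + 1) := by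
      rw [← fq_heis k]; abel
    have h1 : (Z k * S k) * Z k
        = Z k * (Z k * S k) - (q ^ 2 - 1) • (Z k * OmegaEl N q ((k : ℕ) + 1)) := by
      rw [mul_assoc, hh, mul_sub, mul_smul_comm]
    rw [add_mul, mul_add, h1, h2]
    module
  | succ d ih =>
    intro m k hm
    have hmN : m < N := by have := k.isLt; omega
    rw [fq_omega_succ hmN, add_mul, mul_add,
      fq_w_z_gt hq (show (⟨m, hmN⟩ : Fin N) < k by rw [Fin.lt_def]; simpa using by omega),
      ih (m + 1) k (by omega)]

lemma fq_omega_s_le (hq : q ≠ 0) :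
    ∀ d m, ∀ k : Fin N, m + d = (k : ℕ) →
      OmegaEl N q m * S k = S k * OmegaEl N q m := by
  have hq2 : (q ^ 2 : ℂ) ≠ 0 := pow_ne_zero 2 hq
  intro d
  induction d with
  | zero =>
    intro m k hm
    simp only [Nat.add_zero] at hm
    subst hm
    rw [fq_omega_succ k.isLt]
    simp only [Fin.eta]
    have h2 : OmegaEl N q ((k : ℕ) + 1) * S k
        = (q ^ 2)⁻¹ • (S k * OmegaEl N q ((k : ℕ) + 1)) := fq_omega_s_lt hq (Nat.lt_succ_self _)
    have hh : Z k * S k = S k * Z k + (q ^ 2 - 1) • OmegaEl N q ((k : ℕ) + 1) := by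
      rw [← fq_heis k]; abel
    have h1 : (Z k * S k) * S k
        = S k * (Z k * S k) + (q ^ 2 - 1) • (OmegaEl N q ((k : ℕ) + 1) * S k) := by
      conv_lhs => rw [hh]
      rw [add_mul, smul_mul_assoc, mul_assoc]
    rw [add_mul, mul_add, h1, h2]
    rw [smul_smul]
    match_scalars <;> field_simp <;> ring
  | succ d ih =>
    intro m k hm
    have hmN : m < N := by have := k.isLt; omega
    rw [fq_omega_succ hmN, add_mul, mul_add,
      fq_w_s_gt hq (show (⟨m, hmN⟩ : Fin N) < k by rw [Fin.lt_def]; simpa using by omega),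
      ih (m + 1) k (by omega)]

end FqAux

/-- The commutation relations of the `Ω_i` with the generators; in particular `Ω = Ω_0`
is central. -/
theorem fq_Omega_relations (N : ℕ) (hN : 1 ≤ N) (q : ℂ) (hq : q ≠ 0) :
    (∀ i k : Fin N, i ≤ k →
        OmegaEl N q i * zGen N q k = zGen N q k * OmegaEl N q i) ∧
    (∀ i k : Fin N, k < i →
        OmegaEl N q i * zGen N q k = q ^ 2 • (zGen N q k * OmegaEl N q i)) ∧
    (∀ i k : Fin N, i ≤ k →
        OmegaEl N q i * zsGen N q k = zsGen N q k * OmegaEl N q i) ∧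
    (∀ i k : Fin N, k < i →
        OmegaEl N q i * zsGen N q k = (q ^ 2)⁻¹ • (zsGen N q k * OmegaEl N q i)) ∧
    (∀ i : Fin N,
        zGen N q i * zsGen N q i - zsGen N q i * zGen N q i =
          (q ^ 2 - 1) • OmegaEl N q ((i : ℕ) + 1)) ∧
    (∀ i : Fin N,
        q ^ 2 • (zGen N q i * zsGen N q i) - zsGen N q i * zGen N q i =
          (q ^ 2 - 1) • OmegaEl N q i) ∧
    OmegaEl N q 0 ∈ Subring.center (Fq N q) := by
  have hz_le : ∀ i k : Fin N, i ≤ k →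
      OmegaEl N q i * zGen N q k = zGen N q k * OmegaEl N q i := fun i k h =>
    fq_omega_z_le hq ((k : ℕ) - (i : ℕ)) i k (Nat.add_sub_cancel' (Fin.le_def.mp h))
  have hs_le : ∀ i k : Fin N, i ≤ k →
      OmegaEl N q i * zsGen N q k = zsGen N q k * OmegaEl N q i := fun i k h =>
    fq_omega_s_le hq ((k : ℕ) - (i : ℕ)) i k (Nat.add_sub_cancel' (Fin.le_def.mp h))
  refine ⟨hz_le, fun i k h => fq_omega_z_lt hq (Fin.lt_def.mp h),
    hs_le, fun i k h => fq_omega_s_lt hq (Fin.lt_def.mp h),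
    fun i => fq_heis i, ?_, ?_⟩
  · intro i
    have hd := fq_omega_succ (q := q) i.isLt
    simp only [Fin.eta] at hd
    rw [hd, smul_add, ← fq_heis i]
    module
  · rw [Subring.mem_center_iff]
    intro g
    obtain ⟨a, rfl⟩ := RingQuot.mkAlgHom_surjective ℂ (FqRel N q) g
    induction a using FreeAlgebra.induction with
    | grade0 r => rw [AlgHom.commutes]; exact Algebra.commutes r _
    | grade1 x =>
      rcases x with i | i
      · exact (fq_omega_z_le hq (i : ℕ) 0 i (Nat.zero_add _)).symm
      · exact (fq_omega_s_le hq (i : ℕ) 0 i (Nat.zero_add _)).symm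
    | mul a b ha hb => rw [map_mul, mul_assoc, hb, ← mul_assoc, ha, mul_assoc]
    | add a b ha hb => rw [map_add, add_mul, mul_add, ha, hb]
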